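/- Let m ≥ 9. Then q(G_{0,3}) < m + 1 = q(K_{1,m}); in particular the star K_{1,m} has strictly larger Q-index than G_{0,3}. -/

import Mathlib

open SimpleGraph

/-- The degree of a vertex (with classical decidability). -/
noncomputable def deg {V : Type*} [Fintype V] (G : SimpleGraph V) (v : V) : ℕ :=
  letI := Classical.decEq V
  letI := Classical.decRel G.Adj
  G.degree v

/-- The signless Laplacian matrix `Q(G) = D(G) + A(G)` of a graph. -/
noncomputable def signlessLaplacian {V : Type*} [Fintype V] (G : SimpleGraph V) :
    Matrix V V ℝ :=
  letI := Classical.decEq V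
  letI := Classical.decRel G.Adj
  Matrix.diagonal (fun v => (G.degree v : ℝ)) + G.adjMatrix ℝ

/-- The `Q`-index of a graph: the largest eigenvalue of its signless Laplacian. -/
noncomputable def qIndex {V : Type*} [Fintype V] (G : SimpleGraph V) : ℝ :=
  sSup {μ : ℝ | ∃ x : V → ℝ, x ≠ 0 ∧ (signlessLaplacian G).mulVec x = μ • x}

/-- The maximum degree `Δ(G)` (with classical decidability). -/
noncomputable def maxDeg {V : Type*} [Fintype V] (G : SimpleGraph V) : ℕ :=
  letI := Classical.decEq V
  letI := Classical.decRel G.Adj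
  G.maxDegree

/-- The number of edges (the size) of a graph. -/
noncomputable def edgeCount {V : Type*} (G : SimpleGraph V) : ℕ := G.edgeSet.ncard

/-- `graphG m g i` : the cycle `0,1,…,g-1` together with `m-g-1` pendant edges at vertex `0`
(the vertices `g,…,m-2`) and one pendant edge at vertex `i` (the vertex `m-1`).
For `i = 0` this is the graph `G_0`: the cycle with `m-g` pendant edges at vertex `0`. -/
def graphG (m g i : ℕ) : SimpleGraph (Fin m) :=
  SimpleGraph.fromRel (fun u v =>
    (v.val = u.val + 1 ∧ v.val ≤ g - 1) ∨
    (u.val = 0 ∧ v.val = g - 1) ∨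
    (u.val = 0 ∧ g ≤ v.val ∧ v.val ≤ m - 2) ∨
    (u.val = i ∧ v.val = m - 1))

/-- `starGraph m` : the star `K_{1,m}` with center `0` and `m` leaves. -/
def starGraph (m : ℕ) : SimpleGraph (Fin (m + 1)) :=
  SimpleGraph.fromRel (fun u v => u.val = 0 ∧ 1 ≤ v.val)

section Helpers
open Finset
lemma qmul {V : Type*} [Fintype V] [DecidableEq V] (G : SimpleGraph V) [DecidableRel G.Adj]
    (x : V → ℝ) (v : V) :
    (signlessLaplacian G).mulVec x v = ∑ u, if G.Adj v u then x v + x u else 0 := by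
  have h : signlessLaplacian G = Matrix.diagonal (fun v => (G.degree v : ℝ)) + G.adjMatrix ℝ := by
    unfold signlessLaplacian
    congr!
  rw [h, Matrix.add_mulVec]
  simp only [Pi.add_apply, Matrix.mulVec_diagonal, adjMatrix_mulVec_apply]
  rw [degree, neighborFinset_eq_filter, sum_filter]
  rw [Finset.card_filter]
  push_cast
  rw [Finset.sum_mul, ← Finset.sum_add_distrib]
  apply Finset.sum_congr rfl
  intro u _
  by_cases h : G.Adj v u <;> simp [h]

-- generic sum helpers
lemma sum_ite_single {V : Type*} [Fintype V] [DecidableEq V] (P : V → Prop) [DecidablePred P]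
    (w : V) (h : ∀ u, P u ↔ u = w) (f : V → ℝ) :
    (∑ u, if P u then f u else 0) = f w := by
  rw [Finset.sum_congr rfl (fun u _ => by rw [if_congr (h u) rfl rfl])]
  simp [Finset.sum_ite_eq']

lemma sum_ite_pair {V : Type*} [Fintype V] [DecidableEq V] (P : V → Prop) [DecidablePred P]
    (w₁ w₂ : V) (hw : w₁ ≠ w₂) (h : ∀ u, P u ↔ (u = w₁ ∨ u = w₂)) (f : V → ℝ) :
    (∑ u, if P u then f u else 0) = f w₁ + f w₂ := by
  have : ∀ u : V, P u ↔ u ∈ ({w₁, w₂} : Finset V) := by simp [h]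
  rw [Finset.sum_congr rfl (fun u _ => by rw [if_congr (this u) rfl rfl])]
  rw [Finset.sum_ite_mem, Finset.univ_inter, Finset.sum_insert (by simp [hw]),
    Finset.sum_singleton]

lemma sum_ite_ne {V : Type*} [Fintype V] [DecidableEq V] (P : V → Prop) [DecidablePred P]
    (w : V) (h : ∀ u, P u ↔ u ≠ w) (f : V → ℝ) :
    (∑ u, if P u then f u else 0) = (∑ u, f u) - f w := by
  have : ∀ u : V, (if P u then f u else 0) = f u - (if u = w then f u else 0) := by
    intro u
    by_cases hu : u = w
    · simp [hu, (h u).not_left.mpr (by simp [hu])]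
      simp [(h w)]
    · simp [hu, (h u).mpr hu]
  rw [Finset.sum_congr rfl (fun u _ => this u), Finset.sum_sub_distrib]
  simp [Finset.sum_ite_eq']


lemma adjG {m : ℕ} (hm : 9 ≤ m) (u v : Fin m) :
    (graphG m 3 0).Adj u v ↔ u.val ≠ v.val ∧
      (u.val = 0 ∨ v.val = 0 ∨ (u.val = 1 ∧ v.val = 2) ∨ (u.val = 2 ∧ v.val = 1)) := by
  have hu := u.isLt; have hv := v.isLt
  simp only [graphG, fromRel_adj, ne_eq, Fin.ext_iff]
  omega

lemma filter3_eq {m : ℕ} (e0 e1 e2 : Fin m) (he0 : e0.val = 0)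
    (he1 : e1.val = 1) (he2 : e2.val = 2) :
    (univ.filter (fun u : Fin m => u.val < 3)) = {e0, e1, e2} := by
  ext u
  simp only [Finset.mem_filter, Finset.mem_univ, true_and, Finset.mem_insert,
    Finset.mem_singleton, Fin.ext_iff, he0, he1, he2]
  omega

lemma sum_fin_split {m : ℕ} (e0 e1 e2 : Fin m) (he0 : e0.val = 0)
    (he1 : e1.val = 1) (he2 : e2.val = 2) (f : Fin m → ℝ) :
    ∑ u, f u = f e0 + f e1 + f e2 +
      ∑ u ∈ univ.filter (fun u : Fin m => 3 ≤ u.val), f u := by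
  rw [← Finset.sum_filter_add_sum_filter_not univ (fun u : Fin m => u.val < 3) f]
  rw [filter3_eq e0 e1 e2 he0 he1 he2]
  have h1 : (univ.filter (fun u : Fin m => ¬ u.val < 3)) =
      (univ.filter (fun u : Fin m => 3 ≤ u.val)) := by
    apply Finset.filter_congr; intro u _; exact not_lt
  rw [h1, Finset.sum_insert (by
      simp only [Finset.mem_insert, Finset.mem_singleton, Fin.ext_iff, he0, he1, he2]; omega),
    Finset.sum_insert (by simp only [Finset.mem_singleton, Fin.ext_iff, he1, he2]; omega),
    Finset.sum_singleton]
  ring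

lemma card_filter3 {m : ℕ} (e0 e1 e2 : Fin m) (he0 : e0.val = 0)
    (he1 : e1.val = 1) (he2 : e2.val = 2) :
    (univ.filter (fun u : Fin m => 3 ≤ u.val)).card = m - 3 := by
  have h := Finset.card_filter_add_card_filter_not (s := (univ : Finset (Fin m)))
    (p := fun u : Fin m => u.val < 3)
  rw [filter3_eq e0 e1 e2 he0 he1 he2] at h
  have h2 : ({e0, e1, e2} : Finset (Fin m)).card = 3 := by
    rw [Finset.card_insert_of_notMem (by
        simp only [Finset.mem_insert, Finset.mem_singleton, Fin.ext_iff, he0, he1, he2]; omega),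
      Finset.card_insert_of_notMem (by
        simp only [Finset.mem_singleton, Fin.ext_iff, he1, he2]; omega),
      Finset.card_singleton]
  have h1 : (univ.filter (fun u : Fin m => ¬ u.val < 3)) =
      (univ.filter (fun u : Fin m => 3 ≤ u.val)) := by
    apply Finset.filter_congr; intro u _; exact not_lt
  rw [h1, h2, Finset.card_univ, Fintype.card_fin] at h
  omega

lemma G03_bound {m : ℕ} (hm : 9 ≤ m) {μ : ℝ} (x : Fin m → ℝ) (hx0 : x ≠ 0)
    (hx : (signlessLaplacian (graphG m 3 0)).mulVec x = μ • x) : μ ≤ (m : ℝ) + 1/2 := by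
  classical
  by_contra hgt
  push_neg at hgt
  have hmR : (9 : ℝ) ≤ (m : ℝ) := by exact_mod_cast hm
  obtain ⟨e0, he0⟩ : ∃ v : Fin m, v.val = 0 := ⟨⟨0, by omega⟩, rfl⟩
  obtain ⟨e1, he1⟩ : ∃ v : Fin m, v.val = 1 := ⟨⟨1, by omega⟩, rfl⟩
  obtain ⟨e2, he2⟩ : ∃ v : Fin m, v.val = 2 := ⟨⟨2, by omega⟩, rfl⟩
  have heq : ∀ v, (∑ u, if (graphG m 3 0).Adj v u then x v + x u else 0) = μ * x v := by
    intro v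
    have := congrFun hx v
    rwa [qmul] at this
  -- leaf equations
  have hleaf : ∀ v : Fin m, 3 ≤ v.val → (μ - 1) * x v = x e0 := by
    intro v hv
    have h := heq v
    rw [sum_ite_single _ e0 (fun u => by
      rw [adjG hm]; have hu := u.isLt
      simp only [Fin.ext_iff, he0, true_and, and_true, false_and, and_false, ne_eq, not_false_iff, eq_self_iff_true, true_or, or_true, false_or, or_false]; omega)] at h
    linarith
  -- vertex 1 equation
  have h1 : (x e1 + x e0) + (x e1 + x e2) = μ * x e1 := by
    have h := heq e1
    rwa [sum_ite_pair _ e0 e2 (by simp only [ne_eq, Fin.ext_iff, he0, he2]; omega)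
      (fun u => by
        rw [adjG hm]; have hu := u.isLt
        simp only [Fin.ext_iff, he0, he1, he2, true_and, and_true, false_and, and_false, ne_eq, not_false_iff, eq_self_iff_true, true_or, or_true, false_or, or_false]; omega)] at h
  -- vertex 2 equation
  have h2 : (x e2 + x e0) + (x e2 + x e1) = μ * x e2 := by
    have h := heq e2
    rwa [sum_ite_pair _ e0 e1 (by simp only [ne_eq, Fin.ext_iff, he0, he1]; omega)
      (fun u => by
        rw [adjG hm]; have hu := u.isLt
        simp only [Fin.ext_iff, he0, he1, he2, true_and, and_true, false_and, and_false, ne_eq, not_false_iff, eq_self_iff_true, true_or, or_true, false_or, or_false]; omega)] at h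
  -- vertex 0 equation
  have h0 : (m : ℝ) * x e0 + (∑ u, x u) - (x e0 + x e0) = μ * x e0 := by
    have h := heq e0
    rw [sum_ite_ne _ e0 (fun u => by
      rw [adjG hm]; have hu := u.isLt
      simp only [ne_eq, Fin.ext_iff, he0, true_and, and_true, false_and, and_false, not_false_iff, eq_self_iff_true, true_or, or_true, false_or, or_false]; omega)] at h
    rw [Finset.sum_add_distrib, Finset.sum_const, Finset.card_univ, Fintype.card_fin,
      nsmul_eq_mul] at h
    linarith
  -- sum of the leaves
  set S : ℝ := ∑ u ∈ univ.filter (fun u : Fin m => 3 ≤ u.val), x u with hSdef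
  have hS : (μ - 1) * S = ((m : ℝ) - 3) * x e0 := by
    rw [hSdef, Finset.mul_sum]
    rw [Finset.sum_congr rfl (fun u hu => hleaf u (by simpa using hu))]
    rw [Finset.sum_const, card_filter3 e0 e1 e2 he0 he1 he2, nsmul_eq_mul]
    have h3 : ((m - 3 : ℕ) : ℝ) = (m : ℝ) - 3 := by
      have h4 : (3:ℕ) ≤ m := by omega
      push_cast [Nat.cast_sub h4]
      ring
    rw [h3]
  have hsum : (∑ u, x u) = x e0 + x e1 + x e2 + S :=
    sum_fin_split e0 e1 e2 he0 he1 he2 x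
  set a := x e0 with hadef
  set b := x e1 with hbdef
  set c := x e2 with hcdef
  have hμ1 : μ - 1 > 0 := by linarith
  have hμ3 : μ - 3 > 0 := by linarith
  have hbc : (b - c) * (μ - 1) = 0 := by linear_combination h2 - h1
  have hbc' : b = c := by
    rcases mul_eq_zero.mp hbc with h | h
    · linarith
    · linarith
  have ha : a = (μ - 3) * b := by linear_combination h1 + hbc'
  -- the key polynomial identity
  have hP : a * ((μ - ((m:ℝ) - 1)) * (μ - 3) * (μ - 1) - 2 * (μ - 1)
      - ((m:ℝ) - 3) * (μ - 3)) = 0 := by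
    rw [hsum] at h0
    linear_combination (-(μ-1)*(μ-3)) * h0 + (μ-3) * hS + (-2*(μ-1)) * ha
      + (-(μ-1)*(μ-3)) * hbc'
  have hB : (μ - ((m:ℝ) - 1)) * (μ - 3) * (μ - 1) - 2 * (μ - 1) - ((m:ℝ) - 3) * (μ - 3) > 0 := by
    nlinarith [mul_pos hμ3 hμ1, sq_nonneg (μ - (m:ℝ))]
  have ha0 : a = 0 := by
    rcases mul_eq_zero.mp hP with h | h
    · exact h
    · linarith
  have hb0 : b = 0 := by
    rw [ha0] at ha
    rcases mul_eq_zero.mp ha.symm with h | h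
    · linarith
    · exact h
  apply hx0
  funext v
  show x v = 0
  rcases lt_or_ge v.val 3 with hv | hv
  · have : v = e0 ∨ v = e1 ∨ v = e2 := by
      simp only [Fin.ext_iff, he0, he1, he2, true_and, and_true, false_and, and_false, ne_eq, not_false_iff, eq_self_iff_true, true_or, or_true, false_or, or_false]; omega
    rcases this with rfl | rfl | rfl
    · exact ha0
    · exact hb0
    · exact hbc'.symm.trans hb0
  · have := hleaf v hv
    rw [ha0] at this
    have := mul_eq_zero.mp this
    rcases this with h | h
    · linarith
    · exact h

lemma adjS {m : ℕ} (u v : Fin (m + 1)) :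
    (_root_.starGraph m).Adj u v ↔ u.val ≠ v.val ∧ (u.val = 0 ∨ v.val = 0) := by
  have hu := u.isLt; have hv := v.isLt
  simp only [_root_.starGraph, fromRel_adj, ne_eq, Fin.ext_iff]
  omega

lemma star_bound {m : ℕ} (hm : 9 ≤ m) {μ : ℝ} (x : Fin (m + 1) → ℝ) (hx0 : x ≠ 0)
    (hx : (signlessLaplacian (_root_.starGraph m)).mulVec x = μ • x) : μ ≤ (m : ℝ) + 1 := by
  classical
  by_contra hgt
  push_neg at hgt
  have hmR : (9 : ℝ) ≤ (m : ℝ) := by exact_mod_cast hm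
  obtain ⟨e0, he0⟩ : ∃ v : Fin (m + 1), v.val = 0 := ⟨⟨0, by omega⟩, rfl⟩
  have heq : ∀ v, (∑ u, if (_root_.starGraph m).Adj v u then x v + x u else 0) = μ * x v := by
    intro v
    have := congrFun hx v
    rwa [qmul] at this
  have hleaf : ∀ v : Fin (m + 1), 1 ≤ v.val → (μ - 1) * x v = x e0 := by
    intro v hv
    have h := heq v
    rw [sum_ite_single _ e0 (fun u => by
      rw [adjS]
      simp only [Fin.ext_iff, he0, true_and, and_true, false_and, and_false, ne_eq, not_false_iff, eq_self_iff_true, true_or, or_true, false_or, or_false]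
      omega)] at h
    linarith
  have h0 : ((m : ℝ) + 1) * x e0 + (∑ u, x u) - (x e0 + x e0) = μ * x e0 := by
    have h := heq e0
    rw [sum_ite_ne _ e0 (fun u => by
      rw [adjS]
      simp only [Fin.ext_iff, he0, true_and, and_true, false_and, and_false, ne_eq, not_false_iff, eq_self_iff_true, true_or, or_true, false_or, or_false]
      omega)] at h
    rw [Finset.sum_add_distrib, Finset.sum_const, Finset.card_univ, Fintype.card_fin,
      nsmul_eq_mul] at h
    push_cast at h
    linarith
  have hS : (μ - 1) * ((∑ u, x u) - x e0) = (m : ℝ) * x e0 := by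
    have he : (∑ u ∈ univ.erase e0, x u) = (∑ u, x u) - x e0 :=
      Finset.sum_erase_eq_sub (Finset.mem_univ e0)
    rw [← he, Finset.mul_sum]
    rw [Finset.sum_congr rfl (fun u hu => hleaf u (by
      have := Finset.ne_of_mem_erase hu
      have h2 := u.isLt
      simp only [ne_eq, Fin.ext_iff, he0] at this
      omega))]
    rw [Finset.sum_const, Finset.card_erase_of_mem (Finset.mem_univ e0), Finset.card_univ,
      Fintype.card_fin, nsmul_eq_mul]
    push_cast
    ring
  set a := x e0
  have hP : a * (μ * (μ - ((m : ℝ) + 1))) = 0 := by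
    linear_combination hS - (μ - 1) * h0
  have ha0 : a = 0 := by
    rcases mul_eq_zero.mp hP with h | h
    · exact h
    · nlinarith
  apply hx0
  funext v
  show x v = 0
  rcases Nat.eq_zero_or_pos v.val with hv | hv
  · have : v = e0 := by simp only [Fin.ext_iff, he0]; omega
    rw [this]; exact ha0
  · have h := hleaf v hv
    rw [ha0] at h
    rcases mul_eq_zero.mp h with h | h
    · nlinarith
    · exact h

lemma star_mem {m : ℕ} (hm : 9 ≤ m) :
    ∃ x : Fin (m + 1) → ℝ, x ≠ 0 ∧
      (signlessLaplacian (_root_.starGraph m)).mulVec x = ((m : ℝ) + 1) • x := by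
  classical
  obtain ⟨e0, he0⟩ : ∃ v : Fin (m + 1), v.val = 0 := ⟨⟨0, by omega⟩, rfl⟩
  refine ⟨fun v => if v.val = 0 then (m : ℝ) else 1, ?_, ?_⟩
  · intro h
    have := congrFun h e0
    simp only [he0, if_pos rfl, Pi.zero_apply] at this
    have : (m : ℝ) = 0 := this
    have : (9:ℝ) ≤ (m:ℝ) := by exact_mod_cast hm
    linarith
  · funext v
    rw [qmul]
    set x : Fin (m + 1) → ℝ := fun v => if v.val = 0 then (m : ℝ) else 1 with hxdef
    have hsum : (∑ u, x u) = 2 * (m : ℝ) := by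
      have : ∀ u : Fin (m+1), x u = 1 + (if u = e0 then (m : ℝ) - 1 else 0) := by
        intro u
        by_cases hu : u = e0
        · simp [hxdef, hu, he0, (Fin.ext (by simp [he0]) : e0 = 0)]
        · have : u.val ≠ 0 := by
            intro hc; apply hu; simp only [Fin.ext_iff, he0]; omega
          show (if u.val = 0 then (m : ℝ) else 1) = 1 + (if u = e0 then (m : ℝ) - 1 else 0)
          rw [if_neg this, if_neg hu]; ring
      rw [Finset.sum_congr rfl (fun u _ => this u), Finset.sum_add_distrib,
        Finset.sum_const, Finset.card_univ, Fintype.card_fin, nsmul_eq_mul]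
      rw [Finset.sum_ite_eq' univ e0 (fun _ => (m:ℝ) - 1)]
      simp
      push_cast
      ring
    rcases Nat.eq_zero_or_pos v.val with hv | hv
    · have hve : v = e0 := by simp only [Fin.ext_iff, he0]; omega
      rw [sum_ite_ne _ e0 (fun u => by
        rw [adjS]
        simp only [Fin.ext_iff, he0, hv, true_and, and_true, false_and, and_false, ne_eq, not_false_iff, eq_self_iff_true, true_or, or_true, false_or, or_false]
        omega)]
      rw [Finset.sum_add_distrib, Finset.sum_const, Finset.card_univ, Fintype.card_fin,
        nsmul_eq_mul, hsum]
      rw [if_pos hv, if_pos he0]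
      have hxv : x v = (m:ℝ) := by rw [hxdef]; simp [hv]
      rw [Pi.smul_apply, smul_eq_mul, hxv]
      push_cast
      ring
    · have hne : v.val ≠ 0 := by omega
      rw [sum_ite_single _ e0 (fun u => by
        rw [adjS]
        simp only [Fin.ext_iff, he0, true_and, and_true, false_and, and_false, ne_eq, not_false_iff, eq_self_iff_true, true_or, or_true, false_or, or_false]
        omega)]
      rw [if_neg hne, if_pos he0]
      have hxv : x v = 1 := by rw [hxdef]; simp [hne]
      rw [Pi.smul_apply, smul_eq_mul, hxv]
      ring

end Helpers

/-- From the proof of Theorem 1.4: for `m ≥ 9`, `q(G_{0,3}) < m + 1 = q(K_{1,m})`. -/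
theorem qIndex_G03_lt_star (m : ℕ) (hm : 9 ≤ m) :
    qIndex (graphG m 3 0) < (m : ℝ) + 1 ∧ (m : ℝ) + 1 = qIndex (_root_.starGraph m) := by
  have hmR : (9 : ℝ) ≤ (m : ℝ) := by exact_mod_cast hm
  constructor
  · have hle : qIndex (graphG m 3 0) ≤ (m : ℝ) + 1/2 := by
      apply Real.sSup_le
      · rintro μ ⟨x, hx0, hx⟩
        exact G03_bound hm x hx0 hx
      · linarith
    linarith
  · apply le_antisymm
    · apply le_csSup
      · exact ⟨(m : ℝ) + 1, by rintro μ ⟨x, hx0, hx⟩; exact star_bound hm x hx0 hx⟩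
      · exact star_mem hm
    · apply Real.sSup_le
      · rintro μ ⟨x, hx0, hx⟩
        exact star_bound hm x hx0 hx
      · linarith
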